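/- In the queueing construction, for every ε' ∈ (0,1) there exists M₀ such that for all integers M ≥ M₀, all i with 2 ≤ i ≤ N and all j with 0 ≤ j ≤ ε'·M, the jump-to-c condition holds at (i,μ_j): Σ_{(i',μ_{j'}) ≠ (i,μ_j)} |A^{i'}(μ_j|μ_{j'})·Q^{μ_j}(i|i')|·g(i',μ_{j'}) ≥ Σ_{(i',μ_{j'}) ≠ (i,μ_j)} |A^i(μ_{j'}|μ_j)·Q^{μ_{j'}}(i'|i)|·g(i,μ_j). Consequently, under the minimal choice of τ_ε, jumps from (i,μ_j) to the transition state c are possible for all such (i,j). -/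

import Mathlib

noncomputable section

/-- `μ_j = 1/2 + j/M`. -/
def μval (M j : ℕ) : ℝ := 1 / 2 + (j : ℝ) / (M : ℝ)

/-- The queueing generator `Q^μ` on `X = {0,…,N}`: `Q^μ(i+1|i) = 1`, `Q^μ(i−1|i) = μ`,
diagonal `−1` at `0`, `−μ` at `N`, `−(1+μ)` in between, other entries `0`;
`Qq N μ i' i = Q^μ(i'|i)`. -/
def Qq (N : ℕ) (μ : ℝ) (i' i : Fin (N + 1)) : ℝ :=
  if i'.val = i.val + 1 then 1
  else if i'.val + 1 = i.val then μ
  else if i' = i then -((if i.val < N then (1 : ℝ) else 0) + (if 0 < i.val then μ else 0))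
  else 0

/-- The upward jump rate of the environment chain `A^i`: `i` for `i ≥ 1`, `1/M²` for `i = 0`. -/
def upRate (M i : ℕ) : ℝ := if i = 0 then ((M : ℝ) ^ 2)⁻¹ else (i : ℝ)

/-- The environment generator `A^i` on `Z = {μ_0,…,μ_M}` (indexed by `j`):
`A^i(μ_{j+1}|μ_j) = upRate M i`, `A^i(μ_{j−1}|μ_j) = 1`, diagonal making row sums zero,
other entries `0`; `Aq M i j' j = A^i(μ_{j'}|μ_j)`. -/
def Aq (M i : ℕ) (j' j : Fin (M + 1)) : ℝ :=
  if j'.val = j.val + 1 then upRate M i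
  else if j'.val + 1 = j.val then 1
  else if j' = j then -((if j.val < M then upRate M i else 0) + (if 0 < j.val then (1 : ℝ) else 0))
  else 0

/-- `η(μ) = Σ_{i=0}^{N} μ^{−i}`. -/
def ηq (N : ℕ) (μ : ℝ) : ℝ := ∑ k ∈ Finset.range (N + 1), μ⁻¹ ^ k

/-- `m^μ(i) = μ^{−i}/η(μ)`. -/
def mq (N : ℕ) (μ : ℝ) (i : Fin (N + 1)) : ℝ := μ⁻¹ ^ i.val / ηq N μ

/-- `σ(i) = Σ_{j=0}^{M} i^j` for `i ≥ 1`, and `σ(0) = Σ_{j=0}^{M} M^{−2j}`. -/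
def σq (M i : ℕ) : ℝ := ∑ j ∈ Finset.range (M + 1), upRate M i ^ j

/-- `ν^i(μ_j) = i^j/σ(i)` for `i ≥ 1`, and `ν^0(μ_j) = M^{−2j}/σ(0)`. -/
def νq (M i : ℕ) (j : Fin (M + 1)) : ℝ := upRate M i ^ j.val / σq M i

/-- The product measure `g(i,μ_j) = m^{μ_j}(i)·ν^i(μ_j)` on the natural space. -/
def gq (N M : ℕ) (p : Fin (N + 1) × Fin (M + 1)) : ℝ :=
  mq N (μval M p.2.val) p.1 * νq M p.1.val p.2

/-- The minimal choice `τ_ε(i,μ)`: the maximum of the two ratios in (12). -/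
def τq (N M : ℕ) (p : Fin (N + 1) × Fin (M + 1)) : ℝ :=
  max
    ((∑ s ∈ Finset.univ.erase p,
        |Aq M s.1.val p.2 s.2 * Qq N (μval M p.2.val) p.1 s.1| * gq N M s) /
      (Aq M p.1.val p.2 p.2 * Qq N (μval M p.2.val) p.1 p.1 * gq N M p))
    ((∑ s ∈ Finset.univ.erase p,
        |Aq M p.1.val s.2 p.2 * Qq N (μval M s.2.val) s.1 p.1|) /
      (Aq M p.1.val p.2 p.2 * Qq N (μval M p.2.val) p.1 p.1))

/-- The natural-space part of the combined generator:
`R_ε(i',μ'|i,μ) = |A^i(μ'|μ)·Q^{μ'}(i'|i)|` off the diagonal and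
`R_ε(i,μ|i,μ) = −τ_ε(i,μ)·|A^i(μ|μ)·Q^μ(i|i)|`; `Rnat N M s p = R_ε(s|p)`. -/
def Rnat (N M : ℕ) (s p : Fin (N + 1) × Fin (M + 1)) : ℝ :=
  if s = p then -τq N M p * |Aq M p.1.val p.2 p.2 * Qq N (μval M p.2.val) p.1 p.1|
  else |Aq M p.1.val s.2 p.2 * Qq N (μval M s.2.val) s.1 p.1|

/-- Rate into the maintenance state: `R_ε(c_i|(i,μ)) = −Σ_{(i',μ')} R_ε(i',μ'|(i,μ))`. -/
def RcIn (N M : ℕ) (p : Fin (N + 1) × Fin (M + 1)) : ℝ :=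
  -∑ s : Fin (N + 1) × Fin (M + 1), Rnat N M s p

/-- Rate out of the maintenance state:
`R_ε((i,μ)|c_i) = −(1/ε)·Σ_{(i',μ')} R_ε((i,μ)|(i',μ'))·g(i',μ')`. -/
def RcOut (N M : ℕ) (ε : ℝ) (p : Fin (N + 1) × Fin (M + 1)) : ℝ :=
  -(1 / ε) * ∑ s : Fin (N + 1) × Fin (M + 1), Rnat N M p s * gq N M s

/-- The recursively defined pair `(V_r^{(j)}, V_c^{(j)})` with `j = N − t` (fuel `t`). -/
def Vrc (N M : ℕ) (ε : ℝ) : ℕ → ℝ × ℝ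
  | 0 =>
      (∑ μ : Fin (M + 1),
          RcIn N M (⟨N, Nat.lt_succ_self N⟩, μ) * gq N M (⟨N, Nat.lt_succ_self N⟩, μ),
        ε * ∑ μ : Fin (M + 1), RcOut N M ε (⟨N, Nat.lt_succ_self N⟩, μ))
  | t + 1 =>
      let v := Vrc N M ε t
      let j : Fin (N + 1) := ⟨N - (t + 1), by omega⟩
      ((∑ μ : Fin (M + 1), RcIn N M (j, μ) * gq N M (j, μ)) + max (v.1 - v.2) 0,
        ε * (∑ μ : Fin (M + 1), RcOut N M ε (j, μ)) + max (v.2 - v.1) 0)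

/-- `(V_r^{(j)}, V_c^{(j)})` for `1 ≤ j ≤ N`. -/
def Vj (N M : ℕ) (ε : ℝ) (j : ℕ) : ℝ × ℝ := Vrc N M ε (N - j)

/-- The combined generator `R_ε` of the multiple-maintenance-state construction on
`Ŷ = (X×Z) ⊕ {c_0,…,c_N}`; `Rhat N M ε s p = R_ε(s|p)`. -/
def Rhat (N M : ℕ) (ε : ℝ) :
    ((Fin (N + 1) × Fin (M + 1)) ⊕ Fin (N + 1)) →
      ((Fin (N + 1) × Fin (M + 1)) ⊕ Fin (N + 1)) → ℝ
  | Sum.inl s, Sum.inl p => Rnat N M s p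
  | Sum.inr a, Sum.inl p => if a = p.1 then RcIn N M p else 0
  | Sum.inl s, Sum.inr a => if a = s.1 then RcOut N M ε s else 0
  | Sum.inr a, Sum.inr b =>
      if a = b then
        if b.val = 0 then
          -((∑ μ : Fin (M + 1), RcOut N M ε (b, μ)) +
              max ((Vj N M ε 1).2 - (Vj N M ε 1).1) 0 / ε)
        else -(max (Vj N M ε b.val).1 (Vj N M ε b.val).2) / ε
      else if a.val = b.val + 1 then
        max ((Vj N M ε (b.val + 1)).2 - (Vj N M ε (b.val + 1)).1) 0 / ε
      else if a.val + 1 = b.val then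
        max ((Vj N M ε b.val).1 - (Vj N M ε b.val).2) 0 / ε
      else 0

/-- The target stationary measure on `Ŷ`: `g` on the natural space, `ε` on each `c_i`. -/
def ghat (N M : ℕ) (ε : ℝ) : ((Fin (N + 1) × Fin (M + 1)) ⊕ Fin (N + 1)) → ℝ :=
  Sum.elim (gq N M) fun _ => ε


open Finset in
lemma aux_μ_ge (M j : ℕ) : (1:ℝ)/2 ≤ μval M j := by
  have : (0:ℝ) ≤ (j:ℝ) / (M:ℝ) := by positivity
  unfold μval; linarith

lemma aux_μ_pos (M j : ℕ) : 0 < μval M j :=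
  lt_of_lt_of_le (by norm_num) (aux_μ_ge M j)

lemma aux_μ_le (M j : ℕ) (hM : 0 < M) (hj : j ≤ M) : μval M j ≤ 3/2 := by
  have hM' : (0:ℝ) < M := by exact_mod_cast hM
  have : (j:ℝ)/(M:ℝ) ≤ 1 := by rw [div_le_one hM']; exact_mod_cast hj
  unfold μval; linarith

lemma aux_η_pos (N : ℕ) {μ : ℝ} (hμ : 0 < μ) : 0 < ηq N μ :=
  Finset.sum_pos (fun k _ => pow_pos (inv_pos.2 hμ) k)
    ⟨0, Finset.mem_range.2 (Nat.succ_pos N)⟩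

lemma aux_up_pos (M i : ℕ) (hM : 0 < M) : 0 < upRate M i := by
  unfold upRate
  have hMR : (0:ℝ) < M := by exact_mod_cast hM
  split_ifs with h
  · positivity
  · exact_mod_cast Nat.pos_of_ne_zero h

lemma aux_σ_pos (M i : ℕ) (hM : 0 < M) : 0 < σq M i :=
  Finset.sum_pos (fun k _ => pow_pos (aux_up_pos M i hM) k)
    ⟨0, Finset.mem_range.2 (Nat.succ_pos M)⟩

lemma aux_g_pos (N M : ℕ) (hM : 0 < M) (p : Fin (N+1) × Fin (M+1)) : 0 < gq N M p := by
  unfold gq mq νq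
  exact mul_pos
    (div_pos (pow_pos (inv_pos.2 (aux_μ_pos M p.2.val)) _) (aux_η_pos N (aux_μ_pos M p.2.val)))
    (div_pos (pow_pos (aux_up_pos M p.1.val hM) _) (aux_σ_pos M p.1.val hM))

lemma aux_A_bound (M iv : ℕ) (j' j : Fin (M+1)) (B : ℝ) (h1 : (iv:ℝ) ≤ B) (h2 : 1 ≤ B)
    (hiv : iv ≠ 0) : |Aq M iv j' j| ≤ B + 1 := by
  have h0 : (0:ℝ) ≤ (iv:ℝ) := Nat.cast_nonneg iv
  unfold Aq upRate
  rw [if_neg hiv]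
  split_ifs <;> rw [abs_le] <;> constructor <;> linarith

lemma aux_Q_bound (N : ℕ) (μ : ℝ) (i' i : Fin (N+1)) (h0 : 0 ≤ μ) (h3 : μ ≤ 3/2) :
    |Qq N μ i' i| ≤ 5/2 := by
  unfold Qq
  split_ifs <;> rw [abs_le] <;> constructor <;> linarith

lemma aux_A_zero (M iv : ℕ) (j' j : Fin (M+1))
    (h : ¬(j'.val ≤ j.val+1 ∧ j.val ≤ j'.val+1)) : Aq M iv j' j = 0 := by
  have hne : j' ≠ j := by
    intro e; subst e; exact h ⟨by omega, by omega⟩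
  unfold Aq
  rw [if_neg (by omega : ¬(j'.val = j.val+1)),
    if_neg (by omega : ¬(j'.val+1 = j.val)), if_neg hne]

/- STATEMENT 13: for every ε' ∈ (0,1) there is M₀ such that for all M ≥ M₀, all
2 ≤ i ≤ N and all j with j ≤ ε'·M, the jump-to-c condition holds at (i,μ_j), and hence
(minimal choice) τ_ε(i,μ_j) equals its first branch, i.e. jumps to c are possible. -/
set_option maxHeartbeats 2000000

theorem stmt13 (N : ℕ) (hN : 2 ≤ N) (ε' : ℝ) (hε'0 : 0 < ε') (hε'1 : ε' < 1) :
    ∃ M₀ : ℕ, ∀ M : ℕ, M₀ ≤ M →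
      ∀ (i : Fin (N + 1)) (j : Fin (M + 1)), 2 ≤ i.val → (j.val : ℝ) ≤ ε' * (M : ℝ) →
        (∑ s ∈ Finset.univ.erase (i, j),
            |Aq M s.1.val j s.2 * Qq N (μval M j.val) i s.1| * gq N M s ≥
          ∑ s ∈ Finset.univ.erase (i, j),
            |Aq M i.val s.2 j * Qq N (μval M s.2.val) s.1 i| * gq N M (i, j)) ∧
        τq N M (i, j) =
          (∑ s ∈ Finset.univ.erase (i, j),
              |Aq M s.1.val j s.2 * Qq N (μval M j.val) i s.1| * gq N M s) /
            (Aq M i.val j j * Qq N (μval M j.val) i i * gq N M (i, j)) := by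
  classical
  have hN2R : (2:ℝ) ≤ N := by exact_mod_cast hN
  have hN0R : (0:ℝ) ≤ N := by positivity
  obtain ⟨c, hcdef⟩ : ∃ x : ℝ, x = 1 - ε' := ⟨_, rfl⟩
  have hc0 : 0 < c := by rw [hcdef]; linarith
  obtain ⟨K, hKdef⟩ : ∃ x : ℝ, x = 16 * ((N:ℝ)+1)^2 := ⟨_, rfl⟩
  have hK0 : 0 < K := by rw [hKdef]; positivity
  refine ⟨⌈max (2/c) (32*K*(N:ℝ)^2/c^2)⌉₊ + 1, fun M hM i j hi hj => ?_⟩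
  have hMle : max (2/c) (32*K*(N:ℝ)^2/c^2) ≤ (M:ℝ) := by
    refine le_trans (Nat.le_ceil _) ?_
    exact_mod_cast Nat.le_of_succ_le hM
  have hM1 : 1 ≤ M := by omega
  clear hM
  have hMR : (0:ℝ) < M := by exact_mod_cast hM1
  have hM2c : 2/c ≤ (M:ℝ) := le_trans (le_max_left _ _) hMle
  have hM32 : 32*K*(N:ℝ)^2/c^2 ≤ (M:ℝ) := le_trans (le_max_right _ _) hMle
  have hiN : i.val ≤ N := Nat.lt_succ_iff.mp i.isLt
  have hjM' : j.val ≤ M := Nat.lt_succ_iff.mp j.isLt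
  have hjM : j.val < M := by
    by_contra h
    have hjv : j.val = M := by omega
    rw [hjv] at hj
    nlinarith
  have hμ2 : 1/2 ≤ μval M j.val := aux_μ_ge M j.val
  have hμ0 : 0 < μval M j.val := aux_μ_pos M j.val
  have hη : 0 < ηq N (μval M j.val) := aux_η_pos N hμ0
  have hi1lt : i.val - 1 < N + 1 := by omega
  obtain ⟨m, hmdef⟩ : ∃ x : ℕ, x = M - j.val := ⟨_, rfl⟩
  obtain ⟨k, hkdef⟩ : ∃ x : ℕ, x = m / 2 := ⟨_, rfl⟩
  have hmj : m + j.val = M := by omega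
  have hmR : c * M ≤ (m:ℝ) := by
    have h1 : (m:ℝ) = (M:ℝ) - (j.val:ℝ) := by
      rw [hmdef, Nat.cast_sub (le_of_lt hjM)]
    rw [h1, hcdef]; linarith
  have hcM2 : 2 ≤ c * M := by rw [div_le_iff₀ hc0] at hM2c; linarith
  have hkR : c * M / 4 ≤ (k:ℝ) := by
    have h2k : m ≤ 2*k + 1 := by omega
    have h2k' : (m:ℝ) ≤ 2*(k:ℝ)+1 := by exact_mod_cast h2k
    linarith
  have hk2 : K * ((N:ℝ)^2) * ((M:ℝ)+1) ≤ (k:ℝ)^2 := by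
    have h32 : 32*K*(N:ℝ)^2 ≤ c^2 * M := by
      rw [div_le_iff₀ (by positivity)] at hM32; linarith
    have hM1R : (1:ℝ) ≤ M := by exact_mod_cast hM1
    have e1 : (c*M/4)^2 ≤ (k:ℝ)^2 := by
      apply pow_le_pow_left₀ (by linarith) hkR
    have e2 : 32*K*(N:ℝ)^2*(M:ℝ) ≤ c^2*(M:ℝ)^2 := by
      have := mul_le_mul_of_nonneg_right h32 (le_of_lt hMR)
      linarith
    have e3 : K*(N:ℝ)^2 ≤ K*(N:ℝ)^2*(M:ℝ) := by
      have h0 : (0:ℝ) ≤ K*(N:ℝ)^2 := by positivity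
      have := mul_le_mul_of_nonneg_left hM1R h0
      linarith
    linarith [e1, e2, e3]
  have hNpos : (0:ℝ) < N := by linarith
  have hBpow : K * ((M:ℝ)+1) ≤ (1 + 1/(N:ℝ))^m := by
    have h1 : K*((M:ℝ)+1) ≤ ((k:ℝ)/(N:ℝ))^2 := by
      rw [div_pow, le_div_iff₀ (by positivity)]
      linarith [hk2]
    have h2 : ((k:ℝ)/N)^2 ≤ (1 + (k:ℝ)*(1/(N:ℝ)))^2 := by
      apply pow_le_pow_left₀ (by positivity)
      rw [mul_one_div]
      have : (0:ℝ) ≤ (k:ℝ)/N := by positivity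
      linarith
    have h3 : (1 + (k:ℝ)*(1/(N:ℝ)))^2 ≤ ((1+1/(N:ℝ))^k)^2 := by
      apply pow_le_pow_left₀
      · positivity
      · refine one_add_mul_le_pow ?_ k
        have : (0:ℝ) ≤ 1/(N:ℝ) := by positivity
        linarith
    have h4 : ((1+1/(N:ℝ))^k)^2 = (1+1/(N:ℝ))^(k*2) := by rw [pow_mul]
    have h5 : (1+1/(N:ℝ))^(k*2) ≤ (1+1/(N:ℝ))^m := by
      refine pow_le_pow_right₀ ?_ (by omega)
      have : (0:ℝ) ≤ 1/(N:ℝ) := by positivity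
      linarith
    linarith
  have ha_lt : 1 ≤ i.val - 1 := by omega
  obtain ⟨a, hadef⟩ : ∃ x : ℝ, x = ((i.val - 1 : ℕ) : ℝ) := ⟨_, rfl⟩
  have ha1 : (1:ℝ) ≤ a := by rw [hadef]; exact_mod_cast ha_lt
  have ha0 : (0:ℝ) < a := by linarith
  have haN : a ≤ (N:ℝ) := by
    rw [hadef]; exact_mod_cast (by omega : i.val - 1 ≤ N)
  have hia : (i.val : ℝ) = a + 1 := by
    rw [hadef, Nat.cast_sub (by omega : 1 ≤ i.val)]; ring
  have hi0R : (0:ℝ) < (i.val:ℝ) := by linarith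
  have hr : 1 + 1/(N:ℝ) ≤ (i.val:ℝ)/a := by
    rw [hia]
    have h1 : (a+1)/a = 1 + 1/a := by field_simp
    rw [h1]
    have h2 : 1/(N:ℝ) ≤ 1/a := one_div_le_one_div_of_le ha0 haN
    linarith
  have hpow : K*((M:ℝ)+1) * a^m ≤ (i.val:ℝ)^m := by
    have h6 : K*((M:ℝ)+1) ≤ ((i.val:ℝ)/a)^m :=
      le_trans hBpow (pow_le_pow_left₀ (by positivity) hr m)
    rw [div_pow, le_div_iff₀ (by positivity)] at h6
    linarith
  have hupi : upRate M i.val = (i.val:ℝ) := by unfold upRate; rw [if_neg (by omega)]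
  have hupa : upRate M (i.val - 1) = a := by
    unfold upRate; rw [if_neg (by omega), hadef]
  have hσi : ((i.val:ℝ))^M ≤ σq M i.val := by
    unfold σq; rw [hupi]
    exact Finset.single_le_sum (fun t _ => by positivity)
      (Finset.mem_range.2 (Nat.lt_succ_self M))
  have hσa : σq M (i.val - 1) ≤ ((M:ℝ)+1) * a^M := by
    unfold σq; rw [hupa]
    have h := Finset.sum_le_card_nsmul (Finset.range (M+1)) (fun t => a^t) (a^M)
      (fun t ht => pow_le_pow_right₀ ha1 (Nat.lt_succ_iff.mp (Finset.mem_range.mp ht)))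
    rw [Finset.card_range, nsmul_eq_mul] at h
    push_cast at h
    linarith
  have hσi0 : 0 < σq M i.val := aux_σ_pos M i.val hM1
  have hσa0 : 0 < σq M (i.val-1) := aux_σ_pos M (i.val-1) hM1
  have hstar : K * σq M (i.val - 1) * (i.val:ℝ)^j.val ≤ σq M i.val * a^j.val := by
    have hiM : (i.val:ℝ)^M = (i.val:ℝ)^m * (i.val:ℝ)^j.val := by rw [← pow_add, hmj]
    have haM : a^M = a^m * a^j.val := by rw [← pow_add, hmj]
    have step1 : K * σq M (i.val-1) * (i.val:ℝ)^j.val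
        ≤ K * (((M:ℝ)+1)*a^M) * (i.val:ℝ)^j.val := by
      have h := mul_le_mul_of_nonneg_left hσa (le_of_lt hK0)
      exact mul_le_mul_of_nonneg_right h (by positivity)
    have step2 : K * (((M:ℝ)+1)*a^M) * (i.val:ℝ)^j.val
        = (K*((M:ℝ)+1)*a^m) * (a^j.val * (i.val:ℝ)^j.val) := by rw [haM]; ring
    have step3 : (K*((M:ℝ)+1)*a^m) * (a^j.val * (i.val:ℝ)^j.val)
        ≤ (i.val:ℝ)^m * (a^j.val * (i.val:ℝ)^j.val) :=
      mul_le_mul_of_nonneg_right hpow (by positivity)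
    have step4 : (i.val:ℝ)^m * (a^j.val * (i.val:ℝ)^j.val) = (i.val:ℝ)^M * a^j.val := by
      rw [hiM]; ring
    have step5 : (i.val:ℝ)^M * a^j.val ≤ σq M i.val * a^j.val :=
      mul_le_mul_of_nonneg_right hσi (by positivity)
    linarith
  -- g-comparison
  have hg447 : gq N M (i, j) =
      ((μval M j.val)⁻¹^i.val * (i.val:ℝ)^j.val) / (ηq N (μval M j.val) * σq M i.val) := by
    unfold gq mq νq
    rw [hupi, div_mul_div_comm]
  have hg448 : gq N M (⟨i.val - 1, hi1lt⟩, j) =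
      ((μval M j.val)⁻¹^(i.val - 1) * a^j.val) / (ηq N (μval M j.val) * σq M (i.val - 1)) := by
    unfold gq mq νq
    rw [hupa, div_mul_div_comm]
  have hinv2 : (μval M j.val)⁻¹ ≤ 2 := by
    rw [inv_eq_one_div, div_le_iff₀ hμ0]; linarith
  have hinv0 : (0:ℝ) < (μval M j.val)⁻¹ := inv_pos.2 hμ0
  have hg : 8*((N:ℝ)+1)^2 * gq N M (i, j) ≤ gq N M (⟨i.val - 1, hi1lt⟩, j) := by
    rw [hg447, hg448, ← mul_div_assoc,
      div_le_div_iff₀ (mul_pos hη hσi0) (mul_pos hη hσa0)]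
    have hpow' : (μval M j.val)⁻¹ ^ i.val
        = (μval M j.val)⁻¹^(i.val-1) * (μval M j.val)⁻¹ := by
      rw [← pow_succ]; congr 1; omega
    have inner : 8*((N:ℝ)+1)^2 * (μval M j.val)⁻¹ * ((i.val:ℝ)^j.val * σq M (i.val-1))
        ≤ a^j.val * σq M i.val := by
      have hb : (0:ℝ) ≤ (i.val:ℝ)^j.val * σq M (i.val-1) :=
        mul_nonneg (by positivity) (le_of_lt hσa0)
      have t0 : 8*((N:ℝ)+1)^2 * (μval M j.val)⁻¹ ≤ 8*((N:ℝ)+1)^2 * 2 :=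
        mul_le_mul_of_nonneg_left hinv2 (by positivity)
      have t1 := mul_le_mul_of_nonneg_right t0 hb
      have t2 : 8*((N:ℝ)+1)^2 * 2 * ((i.val:ℝ)^j.val * σq M (i.val-1))
          = K * σq M (i.val-1) * (i.val:ℝ)^j.val := by rw [hKdef]; ring
      linarith [hstar]
    have hx : (0:ℝ) ≤ (μval M j.val)⁻¹^(i.val-1) * ηq N (μval M j.val) :=
      mul_nonneg (by positivity) (le_of_lt hη)
    have := mul_le_mul_of_nonneg_left inner hx
    rw [hpow']
    linarith [this]
  -- pointwise bound on the outflow rates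
  have hg0 : 0 < gq N M (i, j) := aux_g_pos N M hM1 (i,j)
  have hg1 : 0 < gq N M (⟨i.val - 1, hi1lt⟩, j) := aux_g_pos N M hM1 _
  have hiNR : (i.val:ℝ) ≤ N := by exact_mod_cast hiN
  have hpt : ∀ s : Fin (N+1) × Fin (M+1),
      |Aq M i.val s.2 j * Qq N (μval M s.2.val) s.1 i| ≤
        (5/2*((N:ℝ)+1)) * (if s.2.val ≤ j.val + 1 ∧ j.val ≤ s.2.val + 1 then (1:ℝ) else 0) := by
    intro s
    by_cases hcond : s.2.val ≤ j.val + 1 ∧ j.val ≤ s.2.val + 1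
    · rw [if_pos hcond, mul_one, abs_mul]
      have hA : |Aq M i.val s.2 j| ≤ (N:ℝ)+1 :=
        aux_A_bound M i.val s.2 j (N:ℝ) hiNR (by linarith) (by omega)
      have hQ : |Qq N (μval M s.2.val) s.1 i| ≤ 5/2 :=
        aux_Q_bound N (μval M s.2.val) s.1 i (le_of_lt (aux_μ_pos _ _))
          (aux_μ_le M s.2.val hM1 (Nat.lt_succ_iff.mp s.2.isLt))
      calc |Aq M i.val s.2 j| * |Qq N (μval M s.2.val) s.1 i|
          ≤ ((N:ℝ)+1) * (5/2) := mul_le_mul hA hQ (abs_nonneg _) (by linarith)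
        _ = 5/2*((N:ℝ)+1) := by ring
    · rw [if_neg hcond, mul_zero, aux_A_zero M i.val s.2 j hcond, zero_mul, abs_zero]
  have hχ : (∑ j' : Fin (M+1),
      if j'.val ≤ j.val+1 ∧ j.val ≤ j'.val+1 then (1:ℝ) else 0) ≤ 3 := by
    rw [Finset.sum_boole]
    have hsub : (Finset.univ.filter
        (fun j' : Fin (M+1) => j'.val ≤ j.val+1 ∧ j.val ≤ j'.val+1)).card
        ≤ ({j.val - 1, j.val, j.val + 1} : Finset ℕ).card := by
      apply Finset.card_le_card_of_injOn Fin.val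
      · intro x hx
        simp only [Finset.mem_coe, Finset.mem_filter, Finset.mem_univ, true_and] at hx
        simp only [Finset.mem_coe, Finset.mem_insert, Finset.mem_singleton]
        omega
      · intro x _ y _ h
        exact Fin.val_injective h
    have h3 : ({j.val - 1, j.val, j.val + 1} : Finset ℕ).card ≤ 3 := by
      apply le_trans (Finset.card_insert_le _ _)
      have := Finset.card_insert_le j.val ({j.val + 1} : Finset ℕ)
      simp only [Finset.card_singleton] at this ⊢
      omega
    have hc3 := le_trans hsub h3
    exact_mod_cast hc3
  have hRbound : (∑ s ∈ Finset.univ.erase (i,j),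
      |Aq M i.val s.2 j * Qq N (μval M s.2.val) s.1 i| * gq N M (i, j))
      ≤ 8*((N:ℝ)+1)^2 * gq N M (i, j) := by
    have step1 : (∑ s ∈ Finset.univ.erase (i,j),
        |Aq M i.val s.2 j * Qq N (μval M s.2.val) s.1 i| * gq N M (i,j))
        ≤ ∑ s : Fin (N+1) × Fin (M+1),
            |Aq M i.val s.2 j * Qq N (μval M s.2.val) s.1 i| * gq N M (i,j) :=
      Finset.sum_le_sum_of_subset_of_nonneg (Finset.erase_subset _ _)
        (fun s _ _ => mul_nonneg (abs_nonneg _) (le_of_lt hg0))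
    have step2 : (∑ s : Fin (N+1) × Fin (M+1),
        |Aq M i.val s.2 j * Qq N (μval M s.2.val) s.1 i| * gq N M (i,j))
        ≤ ∑ s : Fin (N+1) × Fin (M+1),
            (5/2*((N:ℝ)+1)) * (if s.2.val ≤ j.val+1 ∧ j.val ≤ s.2.val+1 then (1:ℝ) else 0)
              * gq N M (i,j) :=
      Finset.sum_le_sum (fun s _ => mul_le_mul_of_nonneg_right (hpt s) (le_of_lt hg0))
    have step3 : (∑ s : Fin (N+1) × Fin (M+1),
        (5/2*((N:ℝ)+1)) * (if s.2.val ≤ j.val+1 ∧ j.val ≤ s.2.val+1 then (1:ℝ) else 0)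
          * gq N M (i,j))
        ≤ ((N:ℝ)+1) * (5/2*((N:ℝ)+1) * gq N M (i,j) * 3) := by
      rw [Fintype.sum_prod_type]
      have hinner : ∀ i' : Fin (N+1),
          (∑ j' : Fin (M+1), (5/2*((N:ℝ)+1))
            * (if j'.val ≤ j.val+1 ∧ j.val ≤ j'.val+1 then (1:ℝ) else 0) * gq N M (i,j))
          ≤ 5/2*((N:ℝ)+1) * gq N M (i,j) * 3 := by
        intro i'
        have heq : (∑ j' : Fin (M+1), (5/2*((N:ℝ)+1))
            * (if j'.val ≤ j.val+1 ∧ j.val ≤ j'.val+1 then (1:ℝ) else 0) * gq N M (i,j))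
            = (5/2*((N:ℝ)+1) * gq N M (i,j)) *
              ∑ j' : Fin (M+1), (if j'.val ≤ j.val+1 ∧ j.val ≤ j'.val+1 then (1:ℝ) else 0) := by
          rw [Finset.mul_sum]
          apply Finset.sum_congr rfl
          intro x _
          ring
        rw [heq]
        exact mul_le_mul_of_nonneg_left hχ
          (mul_nonneg (by positivity) (le_of_lt hg0))
      calc (∑ i' : Fin (N+1), ∑ j' : Fin (M+1), (5/2*((N:ℝ)+1))
            * (if j'.val ≤ j.val+1 ∧ j.val ≤ j'.val+1 then (1:ℝ) else 0) * gq N M (i,j))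
          ≤ ∑ _i' : Fin (N+1), 5/2*((N:ℝ)+1) * gq N M (i,j) * 3 :=
            Finset.sum_le_sum (fun i' _ => hinner i')
        _ = ((N:ℝ)+1) * (5/2*((N:ℝ)+1) * gq N M (i,j) * 3) := by
            rw [Finset.sum_const, Finset.card_univ, Fintype.card_fin, nsmul_eq_mul]
            push_cast
            ring
    have final : ((N:ℝ)+1) * (5/2*((N:ℝ)+1) * gq N M (i,j) * 3)
        ≤ 8*((N:ℝ)+1)^2 * gq N M (i,j) := by
      have h0 : (0:ℝ) ≤ ((N:ℝ)+1)^2 * gq N M (i,j) :=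
        mul_nonneg (by positivity) (le_of_lt hg0)
      have he : ((N:ℝ)+1) * (5/2*((N:ℝ)+1) * gq N M (i,j) * 3)
          = 15/2 * (((N:ℝ)+1)^2 * gq N M (i,j)) := by ring
      have he2 : 8*((N:ℝ)+1)^2 * gq N M (i,j)
          = 8 * (((N:ℝ)+1)^2 * gq N M (i,j)) := by ring
      rw [he, he2]
      linarith
    linarith
  -- extraction of the single dominant inflow term
  have hmem : ((⟨i.val - 1, hi1lt⟩ : Fin (N+1)), j) ∈ Finset.univ.erase (i, j) := by
    rw [Finset.mem_erase]
    refine ⟨?_, Finset.mem_univ _⟩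
    intro h
    rw [Prod.mk.injEq] at h
    have hv := congrArg Fin.val h.1
    simp only at hv
    omega
  have hQ1 : Qq N (μval M j.val) i ⟨i.val - 1, hi1lt⟩ = 1 := by
    unfold Qq
    rw [if_pos]
    show i.val = i.val - 1 + 1
    omega
  have hA1 : Aq M (i.val - 1) j j
      = -(a + (if 0 < j.val then (1:ℝ) else 0)) := by
    unfold Aq
    rw [if_neg (by omega : ¬(j.val = j.val + 1)),
      if_neg (by omega : ¬(j.val + 1 = j.val)), if_pos rfl, if_pos hjM, hupa]
  have hterm : gq N M (⟨i.val - 1, hi1lt⟩, j)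
      ≤ |Aq M (⟨i.val - 1, hi1lt⟩ : Fin (N+1)).val j j
          * Qq N (μval M j.val) i ⟨i.val - 1, hi1lt⟩| * gq N M (⟨i.val - 1, hi1lt⟩, j) := by
    have hv : (⟨i.val - 1, hi1lt⟩ : Fin (N+1)).val = i.val - 1 := rfl
    rw [hv, hA1, hQ1, mul_one, abs_neg, abs_of_nonneg]
    · have h1x : 1 ≤ a + (if 0 < j.val then (1:ℝ) else 0) := by
        split_ifs <;> linarith
      have := mul_le_mul_of_nonneg_right h1x (le_of_lt hg1)
      linarith
    · have : (0:ℝ) ≤ if 0 < j.val then (1:ℝ) else 0 := by split_ifs <;> norm_num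
      linarith
  have hLHS : gq N M (⟨i.val - 1, hi1lt⟩, j)
      ≤ ∑ s ∈ Finset.univ.erase (i,j),
          |Aq M s.1.val j s.2 * Qq N (μval M j.val) i s.1| * gq N M s := by
    refine le_trans hterm ?_
    exact Finset.single_le_sum
      (f := fun s : Fin (N+1) × Fin (M+1) =>
        |Aq M s.1.val j s.2 * Qq N (μval M j.val) i s.1| * gq N M s)
      (fun s _ => mul_nonneg (abs_nonneg _) (le_of_lt (aux_g_pos N M hM1 s))) hmem
  have hmain : (∑ s ∈ Finset.univ.erase (i,j),
      |Aq M i.val s.2 j * Qq N (μval M s.2.val) s.1 i| * gq N M (i, j))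
      ≤ ∑ s ∈ Finset.univ.erase (i,j),
          |Aq M s.1.val j s.2 * Qq N (μval M j.val) i s.1| * gq N M s :=
    le_trans hRbound (le_trans hg hLHS)
  refine ⟨hmain, ?_⟩
  -- the τ identity
  have hAd : Aq M i.val j j = -((i.val:ℝ) + (if 0 < j.val then (1:ℝ) else 0)) := by
    unfold Aq
    rw [if_neg (by omega : ¬(j.val = j.val + 1)),
      if_neg (by omega : ¬(j.val + 1 = j.val)), if_pos rfl, if_pos hjM, hupi]
  have hQd : Qq N (μval M j.val) i i
      = -((if i.val < N then (1:ℝ) else 0) + μval M j.val) := by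
    unfold Qq
    rw [if_neg (by omega : ¬(i.val = i.val + 1)),
      if_neg (by omega : ¬(i.val + 1 = i.val)), if_pos rfl,
      if_pos (by omega : 0 < i.val)]
  have hD : 0 < Aq M i.val j j * Qq N (μval M j.val) i i := by
    apply mul_pos_of_neg_of_neg
    · rw [hAd]
      have h1 : (0:ℝ) ≤ if 0 < j.val then (1:ℝ) else 0 := by split_ifs <;> norm_num
      have h2 : (0:ℝ) < (i.val:ℝ) := hi0R
      linarith
    · rw [hQd]
      have h1 : (0:ℝ) ≤ if i.val < N then (1:ℝ) else 0 := by split_ifs <;> norm_num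
      linarith
  unfold τq
  apply max_eq_left
  rw [div_le_div_iff₀ hD (mul_pos hD hg0)]
  have key : (∑ s ∈ Finset.univ.erase (i,j),
      |Aq M i.val s.2 j * Qq N (μval M s.2.val) s.1 i|) * gq N M (i,j)
      ≤ ∑ s ∈ Finset.univ.erase (i,j),
          |Aq M s.1.val j s.2 * Qq N (μval M j.val) i s.1| * gq N M s := by
    rw [Finset.sum_mul]
    exact hmain
  have := mul_le_mul_of_nonneg_right key (le_of_lt hD)
  linarith

end
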